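/- arXiv:2209.09296 — 3 statements merged into one kernel-verified Lean document; each statement's English description precedes it below -/
import Mathlib

section
/- Let a > 0, u ∈ ℝ, v(u) = a/2 + u, and define G(u) = Φ(v(u)) / V(1, e^{a u}) where V(1, e^{a u}) = Φ(v(u)) + e^{-a u} Φ(v(-u)). Then G is a cumulative distribution function on ℝ (nondecreasing, right-continuous, with limits 0 at −∞ and 1 at +∞), and as a → 0, G(u) → Φ(u) pointwise for every u ∈ ℝ. -/
open Real Set Filter MeasureTheory

/-- The standard Gaussian cumulative distribution function. -/
noncomputable def Phi (x : ℝ) : ℝ :=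
  ∫ t in Set.Iic x, Real.exp (-t ^ 2 / 2) / Real.sqrt (2 * Real.pi)

/-- Marginal distribution function of the normalized increment
`U = (σ d^{α/2})⁻¹ log (η(x₂)/η(x₁))` of a Brown-Resnick field, with `a = σ d^{α/2}`. -/
noncomputable def G (a u : ℝ) : ℝ :=
  Phi (a / 2 + u) / (Phi (a / 2 + u) + Real.exp (-(a * u)) * Phi (a / 2 - u))

namespace PhiAux

noncomputable def f (t : ℝ) : ℝ := Real.exp (-t ^ 2 / 2) / Real.sqrt (2 * Real.pi)

lemma f_pos (t : ℝ) : 0 < f t :=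
  div_pos (Real.exp_pos _) (Real.sqrt_pos.2 (by positivity))

lemma f_nonneg (t : ℝ) : 0 ≤ f t := (f_pos t).le

lemma f_eq (t : ℝ) : f t = Real.exp (-(1/2) * t ^ 2) / Real.sqrt (2 * Real.pi) := by
  unfold f; ring_nf

lemma hf_int : Integrable f := by
  have h : Integrable (fun t : ℝ => Real.exp (-(1/2) * t ^ 2)) :=
    integrable_exp_neg_mul_sq (by norm_num)
  have := h.div_const (Real.sqrt (2 * Real.pi))
  refine this.congr (Eventually.of_forall fun t => ?_)
  rw [f_eq]

lemma hf_total : ∫ t, f t = 1 := by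
  simp_rw [f_eq, div_eq_mul_inv, integral_mul_const]
  rw [integral_gaussian]
  rw [mul_inv_eq_one₀ (by positivity)]
  congr 1
  ring

lemma Phi_eq (x : ℝ) : Phi x = ∫ t in Set.Iic x, f t := rfl

lemma Phi_mono : Monotone Phi := by
  intro x y hxy
  rw [Phi_eq, Phi_eq]
  exact setIntegral_mono_set hf_int.integrableOn (Eventually.of_forall f_nonneg)
    (HasSubset.Subset.eventuallyLE (Iic_subset_Iic.2 hxy))

lemma Phi_continuous : Continuous Phi := by
  have h : Continuous fun b => ∫ t in (0:ℝ)..b, f t := hf_int.continuous_primitive 0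
  have heq : ∀ x, Phi x = (∫ t in (0:ℝ)..x, f t) + Phi 0 := by
    intro x
    have := intervalIntegral.integral_Iic_sub_Iic (μ := volume) (f := f)
      hf_int.integrableOn hf_int.integrableOn (a := 0) (b := x)
    rw [Phi_eq, Phi_eq]
    linarith [this]
  have hPhi : Phi = fun x => (∫ t in (0:ℝ)..x, f t) + Phi 0 := funext heq
  rw [hPhi]
  exact h.add continuous_const

lemma Phi_pos (x : ℝ) : 0 < Phi x := by
  rw [Phi_eq]
  rw [setIntegral_pos_iff_support_of_nonneg_ae (Eventually.of_forall f_nonneg)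
    hf_int.integrableOn]
  have : Function.support f = Set.univ := by
    ext t; simp [Function.support, (f_pos t).ne']
  rw [this, Set.univ_inter]
  simp

lemma Phi_le_one (x : ℝ) : Phi x ≤ 1 := by
  rw [Phi_eq, ← hf_total]
  exact setIntegral_le_integral hf_int (Eventually.of_forall f_nonneg)

lemma Phi_add_Phi_neg (x : ℝ) : Phi x + Phi (-x) = 1 := by
  have hneg : Phi (-x) = ∫ t in Set.Ioi x, f t := by
    rw [Phi_eq, ← integral_comp_neg_Ioi]
    congr 1; ext t; unfold f; rw [neg_pow]; ring_nf
  rw [Phi_eq, hneg, intervalIntegral.integral_Iic_add_Ioi hf_int.integrableOn hf_int.integrableOn, hf_total]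

lemma Phi_tendsto_atTop : Tendsto Phi atTop (nhds 1) := by
  have hcov : AECover (volume : Measure ℝ) atTop (fun i : ℝ => Set.Iic i) :=
    aecover_Iic tendsto_id
  have := hcov.integral_tendsto_of_countably_generated hf_int
  rwa [hf_total] at this

lemma Phi_tendsto_atBot : Tendsto Phi atBot (nhds 0) := by
  have h : ∀ x, Phi x = 1 - Phi (-x) := fun x => by linarith [Phi_add_Phi_neg x]
  have h1 : Tendsto (fun x : ℝ => Phi (-x)) atBot (nhds 1) :=
    Phi_tendsto_atTop.comp tendsto_neg_atBot_atTop
  have h2 : Tendsto (fun x : ℝ => 1 - Phi (-x)) atBot (nhds 0) := by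
    simpa using ((tendsto_const_nhds (x := (1:ℝ))).sub h1)
  exact h2.congr (fun x => (h x).symm)

end PhiAux

open PhiAux

/-- `G a` is a cumulative distribution function (nondecreasing,
right-continuous, with limits 0 at -∞ and 1 at +∞), and `G a u → Φ(u)` as `a → 0⁺`. -/
theorem increment_marginal_is_cdf_and_gaussian_limit :
    (∀ a : ℝ, 0 < a →
        Monotone (G a)
        ∧ (∀ u : ℝ, ContinuousWithinAt (G a) (Set.Ici u) u)
        ∧ Filter.Tendsto (G a) Filter.atBot (nhds 0)
        ∧ Filter.Tendsto (G a) Filter.atTop (nhds 1))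
      ∧ ∀ u : ℝ,
        Filter.Tendsto (fun a : ℝ => G a u) (nhdsWithin 0 (Set.Ioi 0)) (nhds (Phi u)) := by
  have hD : ∀ a u : ℝ, 0 < Phi (a / 2 + u) + Real.exp (-(a * u)) * Phi (a / 2 - u) := by
    intro a u
    have h1 := Phi_pos (a / 2 + u)
    have h2 := Phi_pos (a / 2 - u)
    positivity
  constructor
  · intro a ha
    refine ⟨?_, ?_, ?_, ?_⟩
    · -- monotone
      intro u w huw
      unfold G
      rw [div_le_div_iff₀ (hD a u) (hD a w)]
      have h1 : Phi (a / 2 + u) ≤ Phi (a / 2 + w) := Phi_mono (by linarith)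
      have h2 : Real.exp (-(a * w)) * Phi (a / 2 - w)
          ≤ Real.exp (-(a * u)) * Phi (a / 2 - u) := by
        apply mul_le_mul (Real.exp_le_exp.2 (by nlinarith)) (Phi_mono (by linarith))
          (Phi_pos _).le (Real.exp_pos _).le
      have h3 : Phi (a / 2 + u) * (Real.exp (-(a * w)) * Phi (a / 2 - w))
          ≤ Phi (a / 2 + w) * (Real.exp (-(a * u)) * Phi (a / 2 - u)) :=
        mul_le_mul h1 h2 (mul_nonneg (Real.exp_pos _).le (Phi_pos _).le) (Phi_pos _).le
      nlinarith
    · -- continuity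
      intro u
      apply Continuous.continuousWithinAt
      apply Continuous.div
      · exact Phi_continuous.comp (by continuity)
      · apply Continuous.add (Phi_continuous.comp (by continuity))
        exact (Real.continuous_exp.comp (by continuity)).mul
          (Phi_continuous.comp (by continuity))
      · exact fun u => (hD a u).ne'
    · -- atBot
      have hDtop : Tendsto (fun u : ℝ =>
          Phi (a / 2 + u) + Real.exp (-(a * u)) * Phi (a / 2 - u)) atBot atTop := by
        have hexp : Tendsto (fun u : ℝ => Real.exp (-(a * u))) atBot atTop := by
          apply Real.tendsto_exp_atTop.comp
          have h : Tendsto (fun u : ℝ => a * u) atBot atBot :=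
            (tendsto_id (α := ℝ)).const_mul_atBot ha
          exact tendsto_neg_atBot_atTop.comp h
        have hphi : Tendsto (fun u : ℝ => Phi (a / 2 - u)) atBot (nhds 1) := by
          apply Phi_tendsto_atTop.comp
          have h : Tendsto (fun u : ℝ => -u) atBot atTop := tendsto_neg_atBot_atTop
          exact (tendsto_atTop_add_const_left atBot (a/2) h).congr (fun u => by ring)
        have hmul := hexp.atTop_mul_pos one_pos hphi
        have hnum : Tendsto (fun u : ℝ => Phi (a / 2 + u)) atBot (nhds 0) := by
          apply Phi_tendsto_atBot.comp
          simpa using tendsto_atBot_add_const_left atBot (a/2) (tendsto_id (α := ℝ))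
        exact hnum.add_atTop hmul
      have hinv : Tendsto (fun u : ℝ =>
          (Phi (a / 2 + u) + Real.exp (-(a * u)) * Phi (a / 2 - u))⁻¹) atBot (nhds 0) :=
        hDtop.inv_tendsto_atTop
      apply squeeze_zero (fun u => div_nonneg (Phi_pos _).le (hD a u).le)
        (fun u => ?_) hinv
      rw [div_eq_mul_inv]
      calc Phi (a / 2 + u) * (Phi (a / 2 + u) + Real.exp (-(a * u)) * Phi (a / 2 - u))⁻¹
          ≤ 1 * (Phi (a / 2 + u) + Real.exp (-(a * u)) * Phi (a / 2 - u))⁻¹ :=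
            mul_le_mul_of_nonneg_right (Phi_le_one _) (inv_nonneg.2 (hD a u).le)
        _ = _ := one_mul _
    · -- atTop
      have hnum : Tendsto (fun u : ℝ => Phi (a / 2 + u)) atTop (nhds 1) := by
        apply Phi_tendsto_atTop.comp
        simpa using tendsto_atTop_add_const_left atTop (a/2) (tendsto_id (α := ℝ))
      have hexp : Tendsto (fun u : ℝ => Real.exp (-(a * u))) atTop (nhds 0) := by
        apply Real.tendsto_exp_atBot.comp
        have h : Tendsto (fun u : ℝ => a * u) atTop atTop :=
          (tendsto_id (α := ℝ)).const_mul_atTop ha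
        exact tendsto_neg_atTop_atBot.comp h
      have hphi : Tendsto (fun u : ℝ => Phi (a / 2 - u)) atTop (nhds 0) := by
        apply Phi_tendsto_atBot.comp
        have h : Tendsto (fun u : ℝ => -u) atTop atBot := tendsto_neg_atTop_atBot
        exact (tendsto_atBot_add_const_left atTop (a/2) h).congr (fun u => by ring)
      have hden : Tendsto (fun u : ℝ =>
          Phi (a / 2 + u) + Real.exp (-(a * u)) * Phi (a / 2 - u)) atTop (nhds 1) := by
        simpa using hnum.add (hexp.mul hphi)
      have := hnum.div hden one_ne_zero
      rw [div_one] at this; exact this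
  · -- limit a → 0+
    intro u
    have hcont : ContinuousAt (fun a : ℝ => G a u) 0 := by
      apply ContinuousAt.div
      · exact (Phi_continuous.comp (by continuity)).continuousAt
      · apply ContinuousAt.add (Phi_continuous.comp (by continuity)).continuousAt
        exact ((Real.continuous_exp.comp (by continuity)).mul
          (Phi_continuous.comp (by continuity))).continuousAt
      · exact (hD 0 u).ne'
    have h0 : G 0 u = Phi u := by
      unfold G
      have h1 : (0:ℝ) / 2 + u = u := by ring
      have h2 : (0:ℝ) / 2 - u = -u := by ring
      rw [h1, h2]
      simp only [zero_mul, neg_zero, Real.exp_zero, one_mul]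
      rw [Phi_add_Phi_neg u, div_one]
    have h := hcont.tendsto
    rw [h0] at h
    exact h.mono_left nhdsWithin_le_nhds
end

section
/- Let u ∈ ℝ be fixed, σ > 0, α ∈ (0,2). For d > 0 set a = σ d^{α/2}, z₁ = 1, z₂ = e^{a u}, and let f_d(z₁,z₂; σ) = ∂²/∂z₁∂z₂ exp(−V_d(z₁,z₂;σ)) be the bivariate Brown-Resnick density where V_d(z₁,z₂;σ) = (1/z₁)Φ(a/2 + u) + (1/z₂)Φ(a/2 − u). Then lim_{d→0} ∂/∂σ log f_d(z₁,z₂;σ) = (u² − 1)/σ. -/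
open Real Set Filter

/-- The bivariate Brown-Resnick exponent function with `a = σ d^{α/2}`. -/
noncomputable def Vpair (a z₁ z₂ : ℝ) : ℝ :=
  (1 / z₁) * Phi (a / 2 + Real.log (z₂ / z₁) / a)
    + (1 / z₂) * Phi (a / 2 - Real.log (z₂ / z₁) / a)

/-- The bivariate Brown-Resnick density `f = ∂²/∂z₁∂z₂ exp (-V)`. -/
noncomputable def fpair (a z₁ z₂ : ℝ) : ℝ :=
  deriv (fun t₁ => deriv (fun t₂ => Real.exp (-(Vpair a t₁ t₂))) z₂) z₁


section AuxBR
open MeasureTheory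

noncomputable def gpdf (x : ℝ) : ℝ := Real.exp (-x ^ 2 / 2) / Real.sqrt (2 * Real.pi)

lemma gpdf_pos (x : ℝ) : 0 < gpdf x := by
  unfold gpdf
  positivity

lemma gpdf_cont : Continuous gpdf := by
  unfold gpdf
  continuity

lemma gpdf_integrable : Integrable gpdf := by
  have h : Integrable (fun t : ℝ => Real.exp (-(1/2) * t ^ 2)) := integrable_exp_neg_mul_sq (by norm_num)
  have : gpdf = fun t => Real.exp (-(1/2) * t ^ 2) / Real.sqrt (2 * Real.pi) := by
    funext t; unfold gpdf; ring_nf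
  rw [this]
  exact h.div_const _

lemma hasDerivAt_gpdf (x : ℝ) : HasDerivAt gpdf (-x * gpdf x) x := by
  have h : HasDerivAt (fun t : ℝ => Real.exp (-t ^ 2 / 2) / Real.sqrt (2 * Real.pi))
      ((Real.exp (-x ^ 2 / 2) * (-(2 * x) / 2)) / Real.sqrt (2 * Real.pi)) x := by
    have h1 : HasDerivAt (fun t : ℝ => -t ^ 2 / 2) (-(2 * x) / 2) x := by
      have := ((hasDerivAt_pow 2 x).neg).div_const 2
      simpa using this
    exact (h1.exp).div_const _
  have : gpdf = fun t : ℝ => Real.exp (-t ^ 2 / 2) / Real.sqrt (2 * Real.pi) := rfl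
  rw [this]
  convert h using 1
  show -x * (Real.exp (-x ^ 2 / 2) / Real.sqrt (2 * Real.pi)) = _
  field_simp



lemma Phi_eq (x : ℝ) : Phi x = ∫ t in Set.Iic x, gpdf t := rfl

lemma Phi_sub (x : ℝ) : Phi x - Phi 0 = ∫ t in (0:ℝ)..x, gpdf t := by
  rw [Phi_eq, Phi_eq]
  exact intervalIntegral.integral_Iic_sub_Iic gpdf_integrable.integrableOn gpdf_integrable.integrableOn

lemma hasDerivAt_Phi (x : ℝ) : HasDerivAt Phi (gpdf x) x := by
  have h : HasDerivAt (fun y => Phi 0 + ∫ t in (0:ℝ)..y, gpdf t) (gpdf x) x := by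
    have := intervalIntegral.integral_hasDerivAt_right
      (gpdf_integrable.intervalIntegrable (a := 0) (b := x))
      (gpdf_cont.stronglyMeasurableAtFilter _ _) gpdf_cont.continuousAt
    exact this.const_add _
  convert h using 1
  funext y
  have := Phi_sub y
  linarith

lemma Phi_pos (x : ℝ) : 0 < Phi x := by
  rw [Phi_eq]
  rw [MeasureTheory.setIntegral_pos_iff_support_of_nonneg_ae
    (Filter.Eventually.of_forall (fun t => (gpdf_pos t).le)) gpdf_integrable.integrableOn]
  have : Function.support gpdf = Set.univ := by
    ext t; simp [Function.mem_support, (gpdf_pos t).ne']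
  rw [this, Set.univ_inter]
  simp [Real.volume_Iic]



-- key symmetry identity
lemma gpdf_ident {a z₁ z₂ : ℝ} (ha : a ≠ 0) (h1 : 0 < z₁) (h2 : 0 < z₂) :
    (1 / z₁) * gpdf (a / 2 + Real.log (z₂ / z₁) / a)
      = (1 / z₂) * gpdf (a / 2 - Real.log (z₂ / z₁) / a) := by
  set r := Real.log (z₂ / z₁) with hr
  have hzz : z₂ / z₁ = Real.exp r := (Real.exp_log (by positivity)).symm
  have key : Real.exp (-(a / 2 + r / a) ^ 2 / 2) * z₂ = Real.exp (-(a / 2 - r / a) ^ 2 / 2) * z₁ := by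
    have h2' : z₂ = z₁ * Real.exp r := by
      field_simp at hzz
      linarith [hzz]
    rw [h2', show Real.exp (-(a / 2 + r / a) ^ 2 / 2) * (z₁ * Real.exp r)
      = (Real.exp (-(a / 2 + r / a) ^ 2 / 2) * Real.exp r) * z₁ by ring, ← Real.exp_add]
    have : -(a / 2 + r / a) ^ 2 / 2 + r = -(a / 2 - r / a) ^ 2 / 2 := by
      field_simp
      ring
    rw [this]
  rw [one_div_mul_eq_div, one_div_mul_eq_div, div_eq_div_iff h1.ne' h2.ne']
  unfold gpdf
  rw [div_mul_eq_mul_div, div_mul_eq_mul_div, key]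

-- derivative of log (t / z₁) at z₂  (in second argument)
lemma hasDerivAt_log_div_right {z₁ z₂ : ℝ} (h1 : z₁ ≠ 0) (h2 : 0 < z₂) :
    HasDerivAt (fun t => Real.log (t / z₁)) (1 / z₂) z₂ := by
  have h0 : z₂ / z₁ ≠ 0 := div_ne_zero h2.ne' h1
  have h := ((hasDerivAt_id z₂).div_const z₁).log (by simpa using h0)
  convert h using 1
  rfl
  simp only [id]
  field_simp

-- derivative of log (z₂ / t) at z₁ (in first argument)
lemma hasDerivAt_log_div_left {z₁ z₂ : ℝ} (h1 : 0 < z₁) (h2 : 0 < z₂) :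
    HasDerivAt (fun t => Real.log (z₂ / t)) (-(1 / z₁)) z₁ := by
  have h : HasDerivAt (fun t : ℝ => Real.log z₂ - Real.log t) (-(1/z₁)) z₁ := by
    simpa using ((Real.hasDerivAt_log h1.ne').const_sub (Real.log z₂))
  apply h.congr_of_eventuallyEq
  filter_upwards [eventually_gt_nhds h1] with t ht  -- t > 0? careful direction
  rw [Real.log_div h2.ne' ht.ne']

lemma hasDerivAt_Vpair_right {a z₁ z₂ : ℝ} (ha : 0 < a) (h1 : 0 < z₁) (h2 : 0 < z₂) :
    HasDerivAt (fun t => Vpair a z₁ t)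
      (-((z₂ ^ 2)⁻¹ * Phi (a / 2 - Real.log (z₂ / z₁) / a))) z₂ := by
  have hlog := hasDerivAt_log_div_right h1.ne' h2
  have hx1 : HasDerivAt (fun t => a / 2 + Real.log (t / z₁) / a) (1 / z₂ / a) z₂ :=
    (hlog.div_const a).const_add _
  have hx2 : HasDerivAt (fun t => a / 2 - Real.log (t / z₁) / a) (-(1 / z₂ / a)) z₂ :=
    (hlog.div_const a).const_sub _
  have hT1 : HasDerivAt (fun t => (1 / z₁) * Phi (a / 2 + Real.log (t / z₁) / a))
      ((1 / z₁) * (gpdf (a / 2 + Real.log (z₂ / z₁) / a) * (1 / z₂ / a))) z₂ :=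
    (((hasDerivAt_Phi _).comp _ hx1)).const_mul _
  have hT2 : HasDerivAt (fun t => (1 / t) * Phi (a / 2 - Real.log (t / z₁) / a))
      ((-(1 / z₂ ^ 2)) * Phi (a / 2 - Real.log (z₂ / z₁) / a)
        + (1 / z₂) * (gpdf (a / 2 - Real.log (z₂ / z₁) / a) * (-(1 / z₂ / a)))) z₂ := by
    have hinv : HasDerivAt (fun t : ℝ => 1 / t) (-(1 / z₂ ^ 2)) z₂ := by
      simpa [one_div] using hasDerivAt_inv h2.ne'
    exact hinv.mul ((hasDerivAt_Phi _).comp _ hx2)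
  have h := hT1.add hT2
  have hVeq : (fun t => Vpair a z₁ t)
      = fun t => (1 / z₁) * Phi (a / 2 + Real.log (t / z₁) / a)
        + (1 / t) * Phi (a / 2 - Real.log (t / z₁) / a) := rfl
  rw [hVeq]
  convert h using 1
  rfl
  rfl
  rfl
  have key := gpdf_ident ha.ne' h1 h2
  linear_combination (-(1 / z₂ / a) : ℝ) * key

lemma hasDerivAt_Vpair_left {a z₁ z₂ : ℝ} (ha : 0 < a) (h1 : 0 < z₁) (h2 : 0 < z₂) :
    HasDerivAt (fun t => Vpair a t z₂)
      (-((z₁ ^ 2)⁻¹ * Phi (a / 2 + Real.log (z₂ / z₁) / a))) z₁ := by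
  have hlog := hasDerivAt_log_div_left h1 h2
  have hx1 : HasDerivAt (fun t => a / 2 + Real.log (z₂ / t) / a) (-(1 / z₁) / a) z₁ :=
    (hlog.div_const a).const_add _
  have hx2 : HasDerivAt (fun t => a / 2 - Real.log (z₂ / t) / a) (-(-(1 / z₁) / a)) z₁ :=
    (hlog.div_const a).const_sub _
  have hT1 : HasDerivAt (fun t => (1 / t) * Phi (a / 2 + Real.log (z₂ / t) / a))
      ((-(1 / z₁ ^ 2)) * Phi (a / 2 + Real.log (z₂ / z₁) / a)
        + (1 / z₁) * (gpdf (a / 2 + Real.log (z₂ / z₁) / a) * (-(1 / z₁) / a))) z₁ := by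
    have hinv : HasDerivAt (fun t : ℝ => 1 / t) (-(1 / z₁ ^ 2)) z₁ := by
      simpa [one_div] using hasDerivAt_inv h1.ne'
    exact hinv.mul ((hasDerivAt_Phi _).comp _ hx1)
  have hT2 : HasDerivAt (fun t => (1 / z₂) * Phi (a / 2 - Real.log (z₂ / t) / a))
      ((1 / z₂) * (gpdf (a / 2 - Real.log (z₂ / z₁) / a) * (-(-(1 / z₁) / a)))) z₁ :=
    (((hasDerivAt_Phi _).comp _ hx2)).const_mul _
  have h := hT1.add hT2
  have hVeq : (fun t => Vpair a t z₂)
      = fun t => (1 / t) * Phi (a / 2 + Real.log (z₂ / t) / a)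
        + (1 / z₂) * Phi (a / 2 - Real.log (z₂ / t) / a) := rfl
  rw [hVeq]
  convert h using 1
  rfl
  rfl
  rfl
  have key := gpdf_ident ha.ne' h1 h2
  linear_combination (1 / z₁ / a : ℝ) * key



lemma inner_deriv {a z₂ : ℝ} (ha : 0 < a) (h2 : 0 < z₂) {t₁ : ℝ} (h1 : 0 < t₁) :
    deriv (fun t₂ => Real.exp (-(Vpair a t₁ t₂))) z₂
      = Real.exp (-(Vpair a t₁ z₂)) * ((z₂ ^ 2)⁻¹ * Phi (a / 2 - Real.log (z₂ / t₁) / a)) := by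
  have h := ((hasDerivAt_Vpair_right ha h1 h2).neg).exp
  rw [show (fun t₂ => Real.exp (-(Vpair a t₁ t₂))) = fun x => Real.exp ((-fun t => Vpair a t₁ t) x) from rfl, h.deriv, Pi.neg_apply]
  ring

lemma fpair_eq {a z₁ z₂ : ℝ} (ha : 0 < a) (h1 : 0 < z₁) (h2 : 0 < z₂) :
    fpair a z₁ z₂ = Real.exp (-(Vpair a z₁ z₂)) *
      ((z₁ ^ 2 * z₂ ^ 2)⁻¹ * Phi (a / 2 + Real.log (z₂ / z₁) / a) * Phi (a / 2 - Real.log (z₂ / z₁) / a)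
        + gpdf (a / 2 - Real.log (z₂ / z₁) / a) / (a * z₁ * z₂ ^ 2)) := by
  unfold fpair
  have hEv : (fun t₁ => deriv (fun t₂ => Real.exp (-(Vpair a t₁ t₂))) z₂)
      =ᶠ[nhds z₁] fun t₁ => Real.exp (-(Vpair a t₁ z₂)) * ((z₂ ^ 2)⁻¹ * Phi (a / 2 - Real.log (z₂ / t₁) / a)) := by
    filter_upwards [eventually_gt_nhds h1] with t ht
    exact inner_deriv ha h2 ht
  rw [hEv.deriv_eq]
  -- now differentiate the nice formula in t₁
  have hE : HasDerivAt (fun t₁ => Real.exp (-(Vpair a t₁ z₂)))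
      (Real.exp (-(Vpair a z₁ z₂)) * ((z₁ ^ 2)⁻¹ * Phi (a / 2 + Real.log (z₂ / z₁) / a))) z₁ := by
    have := ((hasDerivAt_Vpair_left ha h1 h2).neg).exp
    convert this using 1
    rfl
    simp only [Pi.neg_apply]
    ring
  have hx2 : HasDerivAt (fun t₁ => a / 2 - Real.log (z₂ / t₁) / a) (-(-(1 / z₁) / a)) z₁ :=
    ((hasDerivAt_log_div_left h1 h2).div_const a).const_sub _
  have hP : HasDerivAt (fun t₁ => (z₂ ^ 2)⁻¹ * Phi (a / 2 - Real.log (z₂ / t₁) / a))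
      ((z₂ ^ 2)⁻¹ * (gpdf (a / 2 - Real.log (z₂ / z₁) / a) * (-(-(1 / z₁) / a)))) z₁ :=
    ((hasDerivAt_Phi _).comp _ hx2).const_mul _
  refine ((hE.mul hP).deriv).trans ?_
  field_simp

noncomputable def Escore (u σ h : ℝ) : ℝ :=
  -(gpdf (σ*h/2 + u) * (h/2 - u/σ) + Real.exp (-(σ*h*u)) * (gpdf (σ*h/2 - u) * (h/2 + u/σ)))
  + (σ*h*(gpdf (σ*h/2 + u) * (h/2 - u/σ) * Phi (σ*h/2 - u)
        + Phi (σ*h/2 + u) * (gpdf (σ*h/2 - u) * (h/2 + u/σ)))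
      + (-(σ*h/2 - u) * gpdf (σ*h/2 - u)) * (h/2 + u/σ) - gpdf (σ*h/2 - u) / σ)
    / (σ*h*(Phi (σ*h/2 + u) * Phi (σ*h/2 - u)) + gpdf (σ*h/2 - u))

lemma deriv_log_fpair (u σ h : ℝ) (hσ : 0 < σ) (hh : 0 < h) :
    deriv (fun s : ℝ => Real.log (fpair (s * h) 1 (Real.exp (σ * h * u)))) σ
      = Escore u σ h := by
  have hσh : 0 < σ * h := mul_pos hσ hh
  -- the explicit log-density
  set L : ℝ → ℝ := fun s =>
    (-(Phi (s*h/2 + σ*h*u/(s*h)) + Real.exp (-(σ*h*u)) * Phi (s*h/2 - σ*h*u/(s*h))) - 2*(σ*h*u))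
    + Real.log (Phi (s*h/2 + σ*h*u/(s*h)) * Phi (s*h/2 - σ*h*u/(s*h))
        + gpdf (s*h/2 - σ*h*u/(s*h)) * (s*h)⁻¹) with hLdef
  have hpt : ∀ s : ℝ, 0 < s →
      Real.log (fpair (s*h) 1 (Real.exp (σ*h*u))) = L s := by
    intro s hs
    have hsh : 0 < s * h := mul_pos hs hh
    have hBpos : 0 < Phi (s*h/2 + σ*h*u/(s*h)) * Phi (s*h/2 - σ*h*u/(s*h))
        + gpdf (s*h/2 - σ*h*u/(s*h)) * (s*h)⁻¹ :=
      add_pos (mul_pos (Phi_pos _) (Phi_pos _)) (mul_pos (gpdf_pos _) (inv_pos.mpr hsh))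
    rw [fpair_eq hsh one_pos (Real.exp_pos _)]
    rw [show Real.exp (σ*h*u) / 1 = Real.exp (σ*h*u) from div_one _, Real.log_exp]
    have hVexp : Vpair (s*h) 1 (Real.exp (σ*h*u))
        = Phi (s*h/2 + σ*h*u/(s*h)) + Real.exp (-(σ*h*u)) * Phi (s*h/2 - σ*h*u/(s*h)) := by
      unfold Vpair
      simp only [div_one, Real.log_exp, one_mul, one_div, ← Real.exp_neg]
    rw [hVexp]
    have hfac : ((1:ℝ)^2 * (Real.exp (σ*h*u))^2)⁻¹ * Phi (s*h/2 + σ*h*u/(s*h)) * Phi (s*h/2 - σ*h*u/(s*h))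
        + gpdf (s*h/2 - σ*h*u/(s*h)) / (s*h*1*(Real.exp (σ*h*u))^2)
        = Real.exp (-(2*(σ*h*u))) * (Phi (s*h/2 + σ*h*u/(s*h)) * Phi (s*h/2 - σ*h*u/(s*h))
            + gpdf (s*h/2 - σ*h*u/(s*h)) * (s*h)⁻¹) := by
      have h2 : (Real.exp (σ*h*u))^2 = Real.exp (2*(σ*h*u)) := by
        rw [sq, ← Real.exp_add]; ring_nf
      rw [h2, Real.exp_neg]
      field_simp
    rw [hfac, ← mul_assoc, ← Real.exp_add,
      Real.log_mul (Real.exp_ne_zero _) hBpos.ne', Real.log_exp]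
    ring
  have hEq : (fun s : ℝ => Real.log (fpair (s * h) 1 (Real.exp (σ * h * u)))) =ᶠ[nhds σ] L := by
    filter_upwards [eventually_gt_nhds hσ] with s hs
    exact hpt s hs
  rw [hEq.deriv_eq]
  -- differentiate L at σ
  have hinv : HasDerivAt (fun s : ℝ => (s*h)⁻¹) (h⁻¹ * -(σ^2)⁻¹) σ := by
    have h0 := (hasDerivAt_inv hσ.ne').const_mul h⁻¹
    have : (fun s : ℝ => (s*h)⁻¹) = fun s : ℝ => h⁻¹ * s⁻¹ := by
      funext s; rw [mul_inv_rev]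
    rw [this]; exact h0
  have hq : HasDerivAt (fun s : ℝ => σ*h*u/(s*h)) (σ*h*u * (h⁻¹ * -(σ^2)⁻¹)) σ := by
    have h0 := hinv.const_mul (σ*h*u)
    have : (fun s : ℝ => σ*h*u/(s*h)) = fun s : ℝ => σ*h*u * (s*h)⁻¹ := by
      funext s; rw [div_eq_mul_inv]
    rw [this]; exact h0
  have hlin : HasDerivAt (fun s : ℝ => s*h/2) (h/2) σ := by
    have := ((hasDerivAt_id σ).mul_const h).div_const 2
    simpa using this
  have hx1 : HasDerivAt (fun s : ℝ => s*h/2 + σ*h*u/(s*h)) (h/2 + σ*h*u * (h⁻¹ * -(σ^2)⁻¹)) σ :=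
    hlin.add hq
  have hx2 : HasDerivAt (fun s : ℝ => s*h/2 - σ*h*u/(s*h)) (h/2 - σ*h*u * (h⁻¹ * -(σ^2)⁻¹)) σ :=
    hlin.sub hq
  have hP1 : HasDerivAt (fun s : ℝ => Phi (s*h/2 + σ*h*u/(s*h)))
      (gpdf (σ*h/2 + σ*h*u/(σ*h)) * (h/2 + σ*h*u * (h⁻¹ * -(σ^2)⁻¹))) σ :=
    (hasDerivAt_Phi _).comp σ hx1
  have hP2 : HasDerivAt (fun s : ℝ => Phi (s*h/2 - σ*h*u/(s*h)))
      (gpdf (σ*h/2 - σ*h*u/(σ*h)) * (h/2 - σ*h*u * (h⁻¹ * -(σ^2)⁻¹))) σ :=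
    (hasDerivAt_Phi _).comp σ hx2
  have hg2 : HasDerivAt (fun s : ℝ => gpdf (s*h/2 - σ*h*u/(s*h)))
      ((-(σ*h/2 - σ*h*u/(σ*h)) * gpdf (σ*h/2 - σ*h*u/(σ*h))) * (h/2 - σ*h*u * (h⁻¹ * -(σ^2)⁻¹))) σ :=
    (hasDerivAt_gpdf _).comp σ hx2
  have hB := (hP1.mul hP2).add (hg2.mul hinv)
  have hBσpos : 0 < Phi (σ*h/2 + σ*h*u/(σ*h)) * Phi (σ*h/2 - σ*h*u/(σ*h))
      + gpdf (σ*h/2 - σ*h*u/(σ*h)) * (σ*h)⁻¹ :=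
    add_pos (mul_pos (Phi_pos _) (Phi_pos _)) (mul_pos (gpdf_pos _) (inv_pos.mpr hσh))
  have hlogB := hB.log hBσpos.ne'
  have hVpart := (((hP1.add (hP2.const_mul (Real.exp (-(σ*h*u))))).neg).sub_const (2*(σ*h*u)))
  have hL : HasDerivAt L _ σ := hVpart.add hlogB
  rw [hL.deriv]
  have he : σ * h * u / (σ * h) = u := by field_simp
  simp only [he]
  unfold Escore
  have e1 : h/2 + σ*h*u*(h⁻¹ * -(σ^2)⁻¹) = h/2 - u/σ := by
    field_simp
    ring
  have e2 : h/2 - σ*h*u*(h⁻¹ * -(σ^2)⁻¹) = h/2 + u/σ := by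
    field_simp
    ring
  rw [e1, e2]
  have hD1 : Phi (σ*h/2 + u) * Phi (σ*h/2 - u) + gpdf (σ*h/2 - u) * (σ*h)⁻¹ ≠ 0 := by
    have := add_pos (mul_pos (Phi_pos (σ*h/2 + u)) (Phi_pos (σ*h/2 - u)))
      (mul_pos (gpdf_pos (σ*h/2 - u)) (inv_pos.mpr hσh))
    exact this.ne'
  have hD2 : σ*h*(Phi (σ*h/2 + u) * Phi (σ*h/2 - u)) + gpdf (σ*h/2 - u) ≠ 0 := by
    have := add_pos (mul_pos hσh (mul_pos (Phi_pos (σ*h/2 + u)) (Phi_pos (σ*h/2 - u))))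
      (gpdf_pos (σ*h/2 - u))
    exact this.ne'
  simp only [Pi.add_apply, Pi.mul_apply, he]
  congr 1
  rw [div_eq_div_iff hD1 hD2]
  field_simp
  ring


lemma Phi_cont : Continuous Phi :=
  continuous_iff_continuousAt.mpr fun x => (hasDerivAt_Phi x).continuousAt

lemma gpdf_neg (x : ℝ) : gpdf (-x) = gpdf x := by
  unfold gpdf; rw [neg_sq]

lemma Escore_contAt (u σ : ℝ) : ContinuousAt (fun h => Escore u σ h) 0 := by
  have c1 : Continuous fun h : ℝ => gpdf (σ*h/2 + u) := gpdf_cont.comp (by continuity)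
  have c2 : Continuous fun h : ℝ => gpdf (σ*h/2 - u) := gpdf_cont.comp (by continuity)
  have c3 : Continuous fun h : ℝ => Phi (σ*h/2 + u) := Phi_cont.comp (by continuity)
  have c4 : Continuous fun h : ℝ => Phi (σ*h/2 - u) := Phi_cont.comp (by continuity)
  have cexp : Continuous fun h : ℝ => Real.exp (-(σ*h*u)) := by continuity
  have cA : Continuous fun h : ℝ =>
      -(gpdf (σ*h/2 + u) * (h/2 - u/σ) + Real.exp (-(σ*h*u)) * (gpdf (σ*h/2 - u) * (h/2 + u/σ))) := by
    apply Continuous.neg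
    exact (c1.mul (by continuity)).add (cexp.mul (c2.mul (by continuity)))
  have cN : Continuous fun h : ℝ =>
      σ*h*(gpdf (σ*h/2 + u) * (h/2 - u/σ) * Phi (σ*h/2 - u)
        + Phi (σ*h/2 + u) * (gpdf (σ*h/2 - u) * (h/2 + u/σ)))
      + (-(σ*h/2 - u) * gpdf (σ*h/2 - u)) * (h/2 + u/σ) - gpdf (σ*h/2 - u) / σ := by
    apply Continuous.sub
    · apply Continuous.add
      · exact (by continuity : Continuous fun h:ℝ => σ*h).mul
          (((c1.mul (by continuity)).mul c4).add (c3.mul (c2.mul (by continuity))))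
      · exact ((by continuity : Continuous fun h:ℝ => -(σ*h/2 - u)).mul c2).mul (by continuity)
    · exact c2.div_const σ
  have cD : Continuous fun h : ℝ => σ*h*(Phi (σ*h/2 + u) * Phi (σ*h/2 - u)) + gpdf (σ*h/2 - u) :=
    ((by continuity : Continuous fun h:ℝ => σ*h).mul (c3.mul c4)).add c2
  have hD0 : σ*(0:ℝ)*(Phi (σ*0/2 + u) * Phi (σ*0/2 - u)) + gpdf (σ*0/2 - u) ≠ 0 := by
    have h1 : σ*(0:ℝ)*(Phi (σ*0/2 + u) * Phi (σ*0/2 - u)) + gpdf (σ*0/2 - u)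
        = gpdf (σ*0/2 - u) := by ring
    rw [h1]; exact (gpdf_pos _).ne'
  unfold Escore
  exact cA.continuousAt.add (cN.continuousAt.div cD.continuousAt hD0)

lemma Escore_zero (u σ : ℝ) (hσ : 0 < σ) : Escore u σ 0 = (u^2 - 1)/σ := by
  unfold Escore
  simp only [mul_zero, zero_mul, zero_div, zero_add, add_zero, zero_sub, neg_zero,
    Real.exp_zero, one_mul, sub_zero, neg_neg]
  rw [gpdf_neg]
  field_simp [(gpdf_pos u).ne']
  ring


end AuxBR

/-- with `z₁ = 1`, `z₂ = e^{σ d^{α/2} u}` held so that the normalized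
increment equals `u`, the pairwise score in `σ` satisfies
`∂/∂σ log f_d(z₁,z₂;σ) → (u² - 1)/σ` as `d → 0⁺`. -/
theorem pairwise_score_sigma_limit (u σ α : ℝ) (hσ : 0 < σ) (hα : α ∈ Set.Ioo (0:ℝ) 2) :
    Filter.Tendsto
      (fun d : ℝ =>
        deriv (fun s : ℝ =>
          Real.log (fpair (s * d ^ (α / 2)) 1 (Real.exp (σ * d ^ (α / 2) * u)))) σ)
      (nhdsWithin 0 (Set.Ioi 0)) (nhds ((u ^ 2 - 1) / σ)) := by
  obtain ⟨hα0, hα2⟩ := hα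
  have hhalf : 0 < α / 2 := by linarith
  have htend : Tendsto (fun d : ℝ => d ^ (α / 2)) (nhdsWithin 0 (Set.Ioi 0)) (nhds 0) := by
    have hc : ContinuousAt (fun d : ℝ => d ^ (α / 2)) 0 :=
      Real.continuousAt_rpow_const 0 (α / 2) (Or.inr hhalf.le)
    have h0 : (0:ℝ) ^ (α / 2) = 0 := Real.zero_rpow hhalf.ne'
    have := hc.continuousWithinAt (s := Set.Ioi 0)
    simpa [ContinuousWithinAt, h0] using this
  have hE : Tendsto (fun d : ℝ => Escore u σ (d ^ (α / 2)))
      (nhdsWithin 0 (Set.Ioi 0)) (nhds ((u ^ 2 - 1) / σ)) := by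
    have := (Escore_contAt u σ).tendsto.comp htend
    rwa [Escore_zero u σ hσ] at this
  apply hE.congr'
  filter_upwards [self_mem_nhdsWithin] with d hd
  exact (deriv_log_fpair u σ _ hσ (Real.rpow_pos_of_pos hd _)).symm
end

section
/- Let x₁, x₂, x₃ ∈ ℝ² be three distinct points with pairwise distances d_{12} = ‖x₂−x₁‖, d_{13} = ‖x₃−x₁‖, d_{23} = ‖x₃−x₂‖, and let α ∈ (0,2]. Then R₁ = (d_{12}^α + d_{13}^α − d_{23}^α)/(2 (d_{12} d_{13})^{α/2}) satisfies −1 < R₁ < 1 whenever the three points are not collinear, and |R₁| ≤ 1 in general. -/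
open Real Set NNReal

lemma rpow_subadd {x y p : ℝ} (hx : 0 ≤ x) (hy : 0 ≤ y) (hp : 0 ≤ p) (hp1 : p ≤ 1) :
    (x + y) ^ p ≤ x ^ p + y ^ p := by
  have h := NNReal.rpow_add_le_add_rpow (⟨x, hx⟩ : ℝ≥0) (⟨y, hy⟩ : ℝ≥0) hp hp1
  have := NNReal.coe_le_coe.mpr h
  exact this

lemma rpow_abs_sub {x y p : ℝ} (hx : 0 ≤ x) (hy : 0 ≤ y) (hp : 0 ≤ p) (hp1 : p ≤ 1) :
    |x ^ p - y ^ p| ≤ |x - y| ^ p := by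
  rcases le_total y x with h | h
  · have hxy : 0 ≤ x - y := by linarith
    have h1 : x ^ p ≤ (x - y) ^ p + y ^ p := by
      have := rpow_subadd hxy hy hp hp1
      simpa [sub_add_cancel] using this
    have h2 : y ^ p ≤ x ^ p := Real.rpow_le_rpow hy h hp
    rw [abs_of_nonneg (by linarith), abs_of_nonneg hxy]
    linarith
  · have hxy : 0 ≤ y - x := by linarith
    have h1 : y ^ p ≤ (y - x) ^ p + x ^ p := by
      have := rpow_subadd hxy hx hp hp1
      simpa [sub_add_cancel] using this
    have h2 : x ^ p ≤ y ^ p := Real.rpow_le_rpow hx h hp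
    rw [abs_sub_comm, abs_of_nonneg (by linarith), abs_sub_comm, abs_of_nonneg hxy]
    linarith

lemma aux_le (A B C : ℝ) (h1 : C ^ 2 ≤ (A + B) ^ 2) (h2 : (A - B) ^ 2 ≤ C ^ 2) :
    -(2 * (A * B)) ≤ A ^ 2 + B ^ 2 - C ^ 2 ∧ A ^ 2 + B ^ 2 - C ^ 2 ≤ 2 * (A * B) :=
  ⟨by nlinarith, by nlinarith⟩

lemma aux_lower (A B C : ℝ) (h : C ^ 2 < (A + B) ^ 2) :
    -1 * (2 * (A * B)) < A ^ 2 + B ^ 2 - C ^ 2 := by nlinarith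

lemma aux_upper (A B C : ℝ) (h : (A - B) ^ 2 < C ^ 2) :
    A ^ 2 + B ^ 2 - C ^ 2 < 2 * (A * B) := by nlinarith

/-- the coefficient
`R₁ = (d₁₂^α + d₁₃^α - d₂₃^α)/(2 (d₁₂ d₁₃)^{α/2})` for three distinct points of `ℝ²`
satisfies `|R₁| ≤ 1` in general, and `-1 < R₁ < 1` when the points are not collinear. -/
theorem correlation_coefficient_bounds (x₁ x₂ x₃ : EuclideanSpace ℝ (Fin 2))
    (h12 : x₁ ≠ x₂) (h13 : x₁ ≠ x₃) (h23 : x₂ ≠ x₃)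
    (α : ℝ) (hα : α ∈ Set.Ioc (0:ℝ) 2) :
    |(dist x₁ x₂ ^ α + dist x₁ x₃ ^ α - dist x₂ x₃ ^ α)
        / (2 * (dist x₁ x₂ * dist x₁ x₃) ^ (α / 2))| ≤ 1
      ∧ (¬ Collinear ℝ ({x₁, x₂, x₃} : Set (EuclideanSpace ℝ (Fin 2))) →
          -1 < (dist x₁ x₂ ^ α + dist x₁ x₃ ^ α - dist x₂ x₃ ^ α)
              / (2 * (dist x₁ x₂ * dist x₁ x₃) ^ (α / 2))
            ∧ (dist x₁ x₂ ^ α + dist x₁ x₃ ^ α - dist x₂ x₃ ^ α)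
              / (2 * (dist x₁ x₂ * dist x₁ x₃) ^ (α / 2)) < 1) := by
  obtain ⟨hα0, hα2⟩ := hα
  set a := dist x₁ x₂ with hadef
  set b := dist x₁ x₃ with hbdef
  set c := dist x₂ x₃ with hcdef
  have ha : 0 < a := dist_pos.mpr h12
  have hb : 0 < b := dist_pos.mpr h13
  have hc : 0 < c := dist_pos.mpr h23
  set β : ℝ := α / 2 with hβdef
  have hβ0 : 0 < β := by positivity
  have hβ1 : β ≤ 1 := by rw [hβdef]; linarith
  set A := a ^ β with hAdef
  set B := b ^ β with hBdef
  set C := c ^ β with hCdef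
  have hA : 0 < A := Real.rpow_pos_of_pos ha β
  have hB : 0 < B := Real.rpow_pos_of_pos hb β
  have hC : 0 < C := Real.rpow_pos_of_pos hc β
  -- rewrite powers
  have hsq : ∀ x : ℝ, 0 < x → x ^ α = (x ^ β) ^ 2 := by
    intro x hx
    rw [← Real.rpow_natCast (x ^ β) 2, ← Real.rpow_mul hx.le]
    norm_num [hβdef]
  have hab : (a * b) ^ β = A * B := Real.mul_rpow ha.le hb.le
  have hD : (0:ℝ) < 2 * (a * b) ^ β := by positivity
  -- triangle inequalities
  have t1 : c ≤ a + b := by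
    rw [hadef, hbdef, hcdef, dist_comm x₁ x₂]; exact dist_triangle x₂ x₁ x₃
  have t2 : a ≤ b + c := by
    rw [hadef, hbdef, hcdef, dist_comm x₂ x₃]; exact dist_triangle x₁ x₃ x₂
  have t3 : b ≤ a + c := by
    rw [hadef, hbdef, hcdef]; exact dist_triangle x₁ x₂ x₃
  -- derived inequalities on A B C
  have hCle : C ≤ A + B := by
    calc C ≤ (a + b) ^ β := Real.rpow_le_rpow hc.le t1 hβ0.le
    _ ≤ A + B := rpow_subadd ha.le hb.le hβ0.le hβ1
  have habs : |a - b| ≤ c := abs_sub_le_iff.mpr ⟨by linarith, by linarith⟩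
  have hABle : |A - B| ≤ C := by
    calc |A - B| ≤ |a - b| ^ β := rpow_abs_sub ha.le hb.le hβ0.le hβ1
    _ ≤ C := Real.rpow_le_rpow (abs_nonneg _) habs hβ0.le
  have hABle' : (A - B) ^ 2 ≤ C ^ 2 := by
    rw [← sq_abs]
    exact pow_le_pow_left₀ (abs_nonneg _) hABle 2
  -- numerator expression
  have hnum : a ^ α + b ^ α - c ^ α = A ^ 2 + B ^ 2 - C ^ 2 := by
    rw [hsq a ha, hsq b hb, hsq c hc]
  have key : |(a ^ α + b ^ α - c ^ α) / (2 * (a * b) ^ β)| ≤ 1 := by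
    rw [abs_div, abs_of_pos hD, div_le_one hD, hnum, hab]
    rw [abs_le]
    exact aux_le A B C (pow_le_pow_left₀ hC.le hCle 2) hABle'
  refine ⟨key, ?_⟩
  intro hcol
  -- strict triangle inequalities
  have hwbtw : ∀ p q r : EuclideanSpace ℝ (Fin 2),
      ({p, q, r} : Set _) = {x₁, x₂, x₃} → dist p q + dist q r ≠ dist p r := by
    intro p q r hset heq
    exact hcol (hset ▸ (dist_add_dist_eq_iff.mp heq).collinear)
  have t1' : c < a + b := by
    rcases lt_or_eq_of_le t1 with h | h
    · exact h
    · exfalso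
      refine hwbtw x₂ x₁ x₃ (Set.insert_comm _ _ _) ?_
      rw [hadef, hbdef, hcdef] at h; rw [dist_comm x₂ x₁]; linarith
  have t2' : a < b + c := by
    rcases lt_or_eq_of_le t2 with h | h
    · exact h
    · exfalso
      refine hwbtw x₁ x₃ x₂ ?_ ?_
      · rw [Set.pair_comm x₃ x₂]
      · rw [hadef, hbdef, hcdef] at h; rw [dist_comm x₃ x₂]; linarith
  have t3' : b < a + c := by
    rcases lt_or_eq_of_le t3 with h | h
    · exact h
    · exfalso
      refine hwbtw x₁ x₂ x₃ rfl ?_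
      rw [hadef, hbdef, hcdef] at h; linarith
  have hCltS : C < A + B := by
    calc C < (a + b) ^ β := Real.rpow_lt_rpow hc.le t1' hβ0
    _ ≤ A + B := rpow_subadd ha.le hb.le hβ0.le hβ1
  have habs' : |a - b| < c := abs_sub_lt_iff.mpr ⟨by linarith, by linarith⟩
  have hABlt : |A - B| < C := by
    calc |A - B| ≤ |a - b| ^ β := rpow_abs_sub ha.le hb.le hβ0.le hβ1
    _ < C := Real.rpow_lt_rpow (abs_nonneg _) habs' hβ0
  have hABlt' : (A - B) ^ 2 < C ^ 2 := by
    rw [← sq_abs]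
    exact pow_lt_pow_left₀ hABlt (abs_nonneg _) two_ne_zero
  constructor
  · rw [lt_div_iff₀ hD, hnum, hab]
    exact aux_lower A B C (pow_lt_pow_left₀ hCltS hC.le two_ne_zero)
  · rw [div_lt_one hD, hnum, hab]
    exact aux_upper A B C hABlt'
end
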